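/- Let w be any function in the shape space P(K) = P₂(K) + span{x₁³, x₂³} of the two-dimensional rectangular Morley element on the square K. Then the deviation of ∂w/∂x₁ from its edge mean is the same function on the two vertical edges of K, and the deviation of ∂w/∂x₂ from its edge mean is the same function on the two horizontal edges: for all x₂ ∈ [x₂c−h, x₂c+h], (R⁰_{e₂}(∂w/∂x₁))(x₂) = (R⁰_{e₄}(∂w/∂x₁))(x₂), and for all x₁ ∈ [x₁c−h, x₁c+h], (R⁰_{e₁}(∂w/∂x₂))(x₁) = (R⁰_{e₃}(∂w/∂x₂))(x₁). -/

import Mathlib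

open MeasureTheory

/-- Partial derivative in the first variable of a curried function on `ℝ²`. -/
noncomputable def pdx (f : ℝ → ℝ → ℝ) : ℝ → ℝ → ℝ := fun x y => deriv (fun t => f t y) x

/-- Partial derivative in the second variable of a curried function on `ℝ²`. -/
noncomputable def pdy (f : ℝ → ℝ → ℝ) : ℝ → ℝ → ℝ := fun x y => deriv (fun t => f x t) y

/-- Membership in the shape space `P(K) = P₂(K) + span{x₁³, x₂³}` of the two-dimensional
rectangular Morley element. -/
def MorleyShape2 (w : ℝ → ℝ → ℝ) : Prop :=
  ∃ c0 c1 c2 c3 c4 c5 c6 c7 : ℝ, ∀ x y : ℝ,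
    w x y = c0 + c1 * x + c2 * y + c3 * x ^ 2 + c4 * (x * y) + c5 * y ^ 2
      + c6 * x ^ 3 + c7 * y ^ 3

lemma int_lin (A B a b : ℝ) :
    (∫ t in a..b, (A + B * t)) = A * (b - a) + B * (b ^ 2 - a ^ 2) / 2 := by
  have h1 : IntervalIntegrable (fun _ : ℝ => A) volume a b := intervalIntegrable_const
  have h2 : IntervalIntegrable (fun t : ℝ => B * t) volume a b :=
    (intervalIntegral.intervalIntegrable_id).const_mul B
  rw [intervalIntegral.integral_add h1 h2, intervalIntegral.integral_const,
    intervalIntegral.integral_const_mul, integral_id]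
  simp [smul_eq_mul]
  ring

/-- For `w` in the 2D rectangular Morley shape space, the deviation of the normal
derivative from its edge mean coincides on the two opposite edges of `K`. -/
theorem stmt_0 (x1c x2c h : ℝ) (hh : 0 < h) (w : ℝ → ℝ → ℝ) (hw : MorleyShape2 w) :
    (∀ y ∈ Set.Icc (x2c - h) (x2c + h),
        pdx w (x1c + h) y - (1 / (2 * h)) * (∫ t in (x2c - h)..(x2c + h), pdx w (x1c + h) t)
          = pdx w (x1c - h) y - (1 / (2 * h)) * (∫ t in (x2c - h)..(x2c + h), pdx w (x1c - h) t)) ∧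
    (∀ x ∈ Set.Icc (x1c - h) (x1c + h),
        pdy w x (x2c - h) - (1 / (2 * h)) * (∫ t in (x1c - h)..(x1c + h), pdy w t (x2c - h))
          = pdy w x (x2c + h) - (1 / (2 * h)) * (∫ t in (x1c - h)..(x1c + h), pdy w t (x2c + h))) := by
  obtain ⟨c0, c1, c2, c3, c4, c5, c6, c7, hw⟩ := hw
  have hx : ∀ x y : ℝ, pdx w x y = (c1 + c4 * y) + (2 * c3 + c4 * 0) * x + 3 * c6 * x ^ 2 := by
    intro x y
    have : (fun t => w t y) = fun t =>
        c0 + c1 * t + c2 * y + c3 * t ^ 2 + c4 * (t * y) + c5 * y ^ 2 + c6 * t ^ 3 + c7 * y ^ 3 :=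
      funext fun t => hw t y
    simp only [pdx, this]
    have : HasDerivAt (fun t : ℝ =>
        c0 + c1 * t + c2 * y + c3 * t ^ 2 + c4 * (t * y) + c5 * y ^ 2 + c6 * t ^ 3 + c7 * y ^ 3)
        (c1 + c4 * y + (2 * c3 + c4 * 0) * x + 3 * c6 * x ^ 2) x := by
      have := (((((((hasDerivAt_const x c0).add ((hasDerivAt_id x).const_mul c1)).add
        (hasDerivAt_const x (c2 * y))).add
        (((hasDerivAt_id x).pow 2).const_mul c3)).add
        (((hasDerivAt_id x).mul_const y).const_mul c4)).add
        (hasDerivAt_const x (c5 * y ^ 2))).add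
        (((hasDerivAt_id x).pow 3).const_mul c6)).add
        (hasDerivAt_const x (c7 * y ^ 3))
      exact this.congr_deriv (by simp; ring)
    exact this.deriv
  have hy : ∀ x y : ℝ, pdy w x y = (c2 + c4 * x) + (2 * c5) * y + 3 * c7 * y ^ 2 := by
    intro x y
    have : (fun t => w x t) = fun t =>
        c0 + c1 * x + c2 * t + c3 * x ^ 2 + c4 * (x * t) + c5 * t ^ 2 + c6 * x ^ 3 + c7 * t ^ 3 :=
      funext fun t => hw x t
    simp only [pdy, this]
    have : HasDerivAt (fun t : ℝ =>
        c0 + c1 * x + c2 * t + c3 * x ^ 2 + c4 * (x * t) + c5 * t ^ 2 + c6 * x ^ 3 + c7 * t ^ 3)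
        (c2 + c4 * x + 2 * c5 * y + 3 * c7 * y ^ 2) y := by
      have := ((((((hasDerivAt_const y (c0 + c1 * x)).add ((hasDerivAt_id y).const_mul c2)).add
        (hasDerivAt_const y (c3 * x ^ 2))).add
        (((hasDerivAt_id y).const_mul x).const_mul c4)).add
        (((hasDerivAt_id y).pow 2).const_mul c5)).add
        (hasDerivAt_const y (c6 * x ^ 3))).add
        (((hasDerivAt_id y).pow 3).const_mul c7)
      exact this.congr_deriv (by simp; ring)
    exact this.deriv
  have hne : (2 : ℝ) * h ≠ 0 := by positivity
  constructor
  · intro y _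
    have e1 : (∫ t in (x2c - h)..(x2c + h), pdx w (x1c + h) t)
        = ((c1 + (2 * c3 + c4 * 0) * (x1c + h) + 3 * c6 * (x1c + h) ^ 2) * ((x2c + h) - (x2c - h))
          + c4 * ((x2c + h) ^ 2 - (x2c - h) ^ 2) / 2) := by
      rw [show (∫ t in (x2c - h)..(x2c + h), pdx w (x1c + h) t)
          = ∫ t in (x2c - h)..(x2c + h),
            ((c1 + (2 * c3 + c4 * 0) * (x1c + h) + 3 * c6 * (x1c + h) ^ 2) + c4 * t) from
        intervalIntegral.integral_congr (fun t _ => by rw [hx]; ring), int_lin]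
    have e2 : (∫ t in (x2c - h)..(x2c + h), pdx w (x1c - h) t)
        = ((c1 + (2 * c3 + c4 * 0) * (x1c - h) + 3 * c6 * (x1c - h) ^ 2) * ((x2c + h) - (x2c - h))
          + c4 * ((x2c + h) ^ 2 - (x2c - h) ^ 2) / 2) := by
      rw [show (∫ t in (x2c - h)..(x2c + h), pdx w (x1c - h) t)
          = ∫ t in (x2c - h)..(x2c + h),
            ((c1 + (2 * c3 + c4 * 0) * (x1c - h) + 3 * c6 * (x1c - h) ^ 2) + c4 * t) from
        intervalIntegral.integral_congr (fun t _ => by rw [hx]; ring), int_lin]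
    rw [hx, hx, e1, e2]
    field_simp
    ring
  · intro x _
    have e1 : (∫ t in (x1c - h)..(x1c + h), pdy w t (x2c - h))
        = ((c2 + 2 * c5 * (x2c - h) + 3 * c7 * (x2c - h) ^ 2) * ((x1c + h) - (x1c - h))
          + c4 * ((x1c + h) ^ 2 - (x1c - h) ^ 2) / 2) := by
      rw [show (∫ t in (x1c - h)..(x1c + h), pdy w t (x2c - h))
          = ∫ t in (x1c - h)..(x1c + h),
            ((c2 + 2 * c5 * (x2c - h) + 3 * c7 * (x2c - h) ^ 2) + c4 * t) from
        intervalIntegral.integral_congr (fun t _ => by rw [hy]; ring), int_lin]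
    have e2 : (∫ t in (x1c - h)..(x1c + h), pdy w t (x2c + h))
        = ((c2 + 2 * c5 * (x2c + h) + 3 * c7 * (x2c + h) ^ 2) * ((x1c + h) - (x1c - h))
          + c4 * ((x1c + h) ^ 2 - (x1c - h) ^ 2) / 2) := by
      rw [show (∫ t in (x1c - h)..(x1c + h), pdy w t (x2c + h))
          = ∫ t in (x1c - h)..(x1c + h),
            ((c2 + 2 * c5 * (x2c + h) + 3 * c7 * (x2c + h) ^ 2) + c4 * t) from
        intervalIntegral.integral_congr (fun t _ => by rw [hy]; ring), int_lin]
    rw [hy, hy, e1, e2]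
    field_simp
    ring
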